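/- Let φ : M_{d₁}(ℂ) → M_{d₂}(ℂ) be a linear map satisfying φ(a*) = φ(a)*, with Choi matrix φ̂, and let d = min(d₁, d₂) and 1 ≤ k ≤ d. Then φ is k-positive if and only if tr(σ φ̂) ≥ 0 for every positive semidefinite σ on ℂ^{d₁} ⊗ ℂ^{d₂} that is a finite sum of rank-one operators |ψ⟩⟨ψ| with Schmidt rank SR(ψ) ≤ k. In particular: φ is positive (sends positive semidefinite matrices to positive semidefinite matrices) if and only if tr(σ φ̂) ≥ 0 for every separable σ, and φ is completely positive (d-positive) if and only if φ̂ is positive semidefinite. -/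

import Mathlib

open scoped Kronecker ComplexOrder
open Matrix

/-- A linear map `φ : M_{d₁}(ℂ) → M_{d₂}(ℂ)` is `k`-positive if `id_k ⊗ φ` sends
positive semidefinite matrices to positive semidefinite matrices. -/
def kPositive (d₁ d₂ k : ℕ)
    (φ : Matrix (Fin d₁) (Fin d₁) ℂ →ₗ[ℂ] Matrix (Fin d₂) (Fin d₂) ℂ) : Prop :=
  ∀ a : Matrix (Fin k × Fin d₁) (Fin k × Fin d₁) ℂ, a.PosSemidef →
    (Matrix.of fun p q : Fin k × Fin d₂ =>
      φ (Matrix.of fun x y => a (p.1, x) (q.1, y)) p.2 q.2).PosSemidef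

/-- The Choi matrix `φ̂ = ∑ i j, E_{ij} ⊗ φ(E_{ij})`. -/
noncomputable def choiMatrix {d₁ d₂ : ℕ}
    (φ : Matrix (Fin d₁) (Fin d₁) ℂ →ₗ[ℂ] Matrix (Fin d₂) (Fin d₂) ℂ) :
    Matrix (Fin d₁ × Fin d₂) (Fin d₁ × Fin d₂) ℂ :=
  ∑ i : Fin d₁, ∑ j : Fin d₁,
    Matrix.single i j (1 : ℂ) ⊗ₖ φ (Matrix.single i j (1 : ℂ))

/-- The Schmidt rank of `ψ ∈ ℂ^{d₁} ⊗ ℂ^{d₂}`. -/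
noncomputable def schmidtRank {d₁ d₂ : ℕ} (ψ : Fin d₁ × Fin d₂ → ℂ) : ℕ :=
  sInf {r | ∃ (x : Fin r → Fin d₁ → ℂ) (y : Fin r → Fin d₂ → ℂ),
    ψ = fun p => ∑ α, x α p.1 * y α p.2}

/-- `σ` is a finite sum of rank-one operators `|ψ⟩⟨ψ|` with Schmidt rank `≤ k`. -/
def SchmidtNumberLE {d₁ d₂ : ℕ} (k : ℕ)
    (σ : Matrix (Fin d₁ × Fin d₂) (Fin d₁ × Fin d₂) ℂ) : Prop :=
  ∃ (m : ℕ) (ψ : Fin m → Fin d₁ × Fin d₂ → ℂ),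
    (∀ t, schmidtRank (ψ t) ≤ k) ∧
    σ = ∑ t, Matrix.vecMulVec (ψ t) (star (ψ t))

/-- `σ` is separable: a finite sum of Kronecker products of positive semidefinite
matrices. -/
def Separable {d₁ d₂ : ℕ}
    (σ : Matrix (Fin d₁ × Fin d₂) (Fin d₁ × Fin d₂) ℂ) : Prop :=
  ∃ (m : ℕ) (σ₁ : Fin m → Matrix (Fin d₁) (Fin d₁) ℂ)
    (σ₂ : Fin m → Matrix (Fin d₂) (Fin d₂) ℂ),
    (∀ t, (σ₁ t).PosSemidef) ∧ (∀ t, (σ₂ t).PosSemidef) ∧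
    σ = ∑ t, σ₁ t ⊗ₖ σ₂ t

section Helpers


section sums
variable {M : Type*} [AddCommMonoid M] {ι₁ ι₂ ι₃ ι₄ ι₅ ι₆ : Type*}
  [Fintype ι₁] [Fintype ι₂] [Fintype ι₃] [Fintype ι₄] [Fintype ι₅] [Fintype ι₆]

lemma sum4_rev (f : ι₁ → ι₂ → ι₃ → ι₄ → M) :
    ∑ a, ∑ b, ∑ c, ∑ d, f a b c d = ∑ d, ∑ b, ∑ c, ∑ a, f a b c d := by
  rw [Finset.sum_comm]
  conv_lhs => enter [2, b]; rw [Finset.sum_comm]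
  conv_lhs => enter [2, b, 2, c]; rw [Finset.sum_comm]
  conv_lhs => enter [2, b]; rw [Finset.sum_comm]
  rw [Finset.sum_comm]

lemma sum4_perm (f : ι₁ → ι₂ → ι₃ → ι₄ → M) :
    ∑ a, ∑ b, ∑ c, ∑ d, f a b c d = ∑ b, ∑ d, ∑ a, ∑ c, f a b c d := by
  rw [Finset.sum_comm]
  conv_lhs => enter [2, b]; rw [Finset.sum_comm]
  conv_lhs => enter [2, b, 2, c]; rw [Finset.sum_comm]
  conv_lhs => enter [2, b]; rw [Finset.sum_comm]
  conv_lhs => enter [2, b, 2, c]; rw [Finset.sum_comm]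

lemma sum6_perm (f : ι₁ → ι₂ → ι₃ → ι₄ → ι₅ → ι₆ → M) :
    ∑ a, ∑ b, ∑ c, ∑ d, ∑ e, ∑ g, f a b c d e g
      = ∑ b, ∑ d, ∑ e, ∑ g, ∑ a, ∑ c, f a b c d e g := by
  rw [Finset.sum_comm]
  conv_lhs => enter [2, i1]; rw [Finset.sum_comm]
  conv_lhs => enter [2, i1, 2, i2]; rw [Finset.sum_comm]
  conv_lhs => enter [2, i1, 2, i2, 2, i3]; rw [Finset.sum_comm]
  conv_lhs => enter [2, i1, 2, i2, 2, i3, 2, i4]; rw [Finset.sum_comm]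
  conv_lhs => enter [2, i1]; rw [Finset.sum_comm]
  conv_lhs => enter [2, i1, 2, i2]; rw [Finset.sum_comm]
  conv_lhs => enter [2, i1, 2, i2, 2, i3]; rw [Finset.sum_comm]
  conv_lhs => enter [2, i1, 2, i2, 2, i3, 2, i4]; rw [Finset.sum_comm]

end sums


variable {d₁ d₂ : ℕ} (φ : Matrix (Fin d₁) (Fin d₁) ℂ →ₗ[ℂ] Matrix (Fin d₂) (Fin d₂) ℂ)

lemma phi_apply (M : Matrix (Fin d₁) (Fin d₁) ℂ) :
    φ M = ∑ i, ∑ j, M i j • φ (single i j 1) := by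
  conv_lhs => rw [matrix_eq_sum_single M]
  rw [map_sum]
  refine Finset.sum_congr rfl fun i _ => ?_
  rw [map_sum]
  refine Finset.sum_congr rfl fun j _ => ?_
  have : single i j (M i j) = M i j • single i j (1:ℂ) := by
    rw [smul_single, smul_eq_mul, mul_one]
  rw [this, _root_.map_smul]

lemma choi_entry (P Q : Fin d₁ × Fin d₂) :
    choiMatrix φ P Q = φ (single P.1 Q.1 1) P.2 Q.2 := by
  simp [choiMatrix, Matrix.sum_apply, kroneckerMap_apply, Matrix.single, of_apply, ite_mul,
    Finset.sum_ite_eq, Finset.sum_ite_eq', ite_and]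

lemma trace_mul_choi (σ : Matrix (Fin d₁ × Fin d₂) (Fin d₁ × Fin d₂) ℂ) :
    (σ * choiMatrix φ).trace
      = ∑ P : Fin d₁ × Fin d₂, ∑ Q : Fin d₁ × Fin d₂,
          σ P Q * φ (single Q.1 P.1 1) Q.2 P.2 := by
  rw [Matrix.trace]
  simp only [Matrix.diag, Matrix.mul_apply, choi_entry]

noncomputable def outMat {k : ℕ} (a : Matrix (Fin k × Fin d₁) (Fin k × Fin d₁) ℂ) :
    Matrix (Fin k × Fin d₂) (Fin k × Fin d₂) ℂ :=
  Matrix.of fun p q => φ (Matrix.of fun x y => a (p.1, x) (q.1, y)) p.2 q.2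

noncomputable def canonQ (ψ : Fin d₁ × Fin d₂ → ℂ) : ℂ :=
  ∑ b : Fin d₂, ∑ c : Fin d₂,
    φ (vecMulVec (fun s => (starRingEnd ℂ) (ψ (s, b))) (fun t => ψ (t, c))) b c

lemma trace_eq_canon (ψ : Fin d₁ × Fin d₂ → ℂ) :
    (vecMulVec ψ (star ψ) * choiMatrix φ).trace = canonQ φ ψ := by
  rw [trace_mul_choi]
  simp only [vecMulVec_apply, Pi.star_apply, RCLike.star_def, Fintype.sum_prod_type]
  rw [sum4_rev]
  unfold canonQ
  refine Finset.sum_congr rfl fun b _ => Finset.sum_congr rfl fun c _ => ?_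
  rw [phi_apply φ (vecMulVec _ _)]
  simp only [Matrix.sum_apply, Matrix.smul_apply, vecMulVec_apply, smul_eq_mul]
  refine Finset.sum_congr rfl fun s _ => Finset.sum_congr rfl fun t _ => ?_
  ring

lemma quad_eq_canon {k : ℕ} (x : Fin k → Fin d₁ → ℂ) (y : Fin k → Fin d₂ → ℂ) :
    star (fun r : Fin k × Fin d₂ => y r.1 r.2) ⬝ᵥ
      (outMat φ (vecMulVec (fun r : Fin k × Fin d₁ => (starRingEnd ℂ) (x r.1 r.2))
          (star fun r : Fin k × Fin d₁ => (starRingEnd ℂ) (x r.1 r.2))) *ᵥ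
        fun r : Fin k × Fin d₂ => y r.1 r.2)
      = canonQ φ (fun p => ∑ α, x α p.1 * y α p.2) := by
  simp only [dotProduct, mulVec, outMat, Matrix.of_apply, vecMulVec_apply, Pi.star_apply,
    RCLike.star_def, Complex.conj_conj]
  -- expand φ of the rank one slice
  conv_lhs =>
    enter [2, q, 2, 2, p, 1]
    rw [phi_apply]
  simp only [Matrix.sum_apply, Matrix.smul_apply, Matrix.of_apply, smul_eq_mul,
    Fintype.sum_prod_type, Finset.mul_sum, Finset.sum_mul]
  rw [sum6_perm]
  unfold canonQ
  refine Finset.sum_congr rfl fun b _ => Finset.sum_congr rfl fun c _ => ?_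
  rw [phi_apply φ (vecMulVec _ _)]
  simp only [Matrix.sum_apply, Matrix.smul_apply, vecMulVec_apply, smul_eq_mul,
    map_sum, _root_.map_mul, Complex.conj_conj, Finset.sum_mul, Finset.mul_sum]
  conv_lhs => enter [2, s, 2, t]; rw [Finset.sum_comm]
  refine Finset.sum_congr rfl fun s _ => Finset.sum_congr rfl fun t _ => ?_
  refine Finset.sum_congr rfl fun α _ => Finset.sum_congr rfl fun β _ => ?_
  ring

-- rank-one matrices are PSD
lemma psd_outer {n : Type*} [Fintype n] [DecidableEq n] (v : n → ℂ) :
    (vecMulVec v (star v)).PosSemidef := by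
  refine .of_dotProduct_mulVec_nonneg ?_ ?_
  · ext i j
    simp [conjTranspose_apply, vecMulVec_apply, mul_comm]
  · intro x
    have h1 : vecMulVec v (star v) *ᵥ x = fun i => v i * (star v ⬝ᵥ x) := by
      funext i
      simp [mulVec, vecMulVec_apply, dotProduct, Finset.mul_sum, mul_assoc]
    rw [h1]
    have h2 : star x ⬝ᵥ (fun i => v i * (star v ⬝ᵥ x)) = (star x ⬝ᵥ v) * (star v ⬝ᵥ x) := by
      simp [dotProduct, Finset.sum_mul, mul_assoc]
    rw [h2]
    have h3 : star x ⬝ᵥ v = star (star v ⬝ᵥ x) := by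
      simp [dotProduct, Finset.mul_sum, mul_comm]
    rw [h3]
    exact star_mul_self_nonneg _

-- trace of rank-one times M
lemma trace_outer_mul {n : Type*} [Fintype n] (u : n → ℂ) (M : Matrix n n ℂ) :
    (vecMulVec u (star u) * M).trace = star u ⬝ᵥ (M *ᵥ u) := by
  simp only [Matrix.trace, Matrix.diag, Matrix.mul_apply, vecMulVec_apply, Pi.star_apply,
    dotProduct, mulVec]
  rw [Finset.sum_comm]
  refine Finset.sum_congr rfl fun j _ => ?_
  simp only [dotProduct, Finset.mul_sum]
  refine Finset.sum_congr rfl fun i _ => ?_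
  ring

open scoped MatrixOrder in
lemma posSemidef_iff_eq_transpose_mul_self {n : Type*} [Fintype n] [DecidableEq n]
    {A : Matrix n n ℂ} : A.PosSemidef ↔ ∃ B : Matrix n n ℂ, A = Bᴴ * B := by
  refine ⟨fun hA => ?_, fun ⟨B, hB⟩ => hB ▸ posSemidef_conjTranspose_mul_self B⟩
  obtain ⟨B, hB⟩ := CStarAlgebra.nonneg_iff_eq_star_mul_self.mp hA.nonneg
  exact ⟨B, hB⟩

-- diag of PSD nonneg, trace nonneg
lemma psd_trace_nonneg {n : Type*} [Fintype n] [DecidableEq n] {M : Matrix n n ℂ}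
    (hM : M.PosSemidef) : 0 ≤ M.trace := by
  refine Finset.sum_nonneg fun i _ => ?_
  have := hM.dotProduct_mulVec_nonneg (Pi.single i 1)
  simpa [mulVec_single, dotProduct, Pi.single_apply, Finset.sum_ite_eq, mul_comm] using this

lemma trace_mul_psd_nonneg {n : Type*} [Fintype n] [DecidableEq n] {A B : Matrix n n ℂ}
    (hA : A.PosSemidef) (hB : B.PosSemidef) : 0 ≤ (A * B).trace := by
  obtain ⟨C, rfl⟩ := posSemidef_iff_eq_transpose_mul_self.mp hA
  rw [Matrix.mul_assoc, Matrix.trace_mul_comm]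
  exact psd_trace_nonneg (hB.mul_mul_conjTranspose_same C)

-- conjTranspose of kronecker
lemma kron_conjTranspose {n m : Type*} [Fintype n] [Fintype m]
    (A : Matrix n n ℂ) (B : Matrix m m ℂ) : (A ⊗ₖ B)ᴴ = Aᴴ ⊗ₖ Bᴴ := by
  ext p q
  simp [conjTranspose_apply, kroneckerMap_apply, star_mul']

lemma psd_kron {n m : Type*} [Fintype n] [Fintype m] [DecidableEq n] [DecidableEq m]
    {A : Matrix n n ℂ} {B : Matrix m m ℂ} (hA : A.PosSemidef) (hB : B.PosSemidef) :
    (A ⊗ₖ B).PosSemidef := by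
  obtain ⟨C, rfl⟩ := posSemidef_iff_eq_transpose_mul_self.mp hA
  obtain ⟨D, rfl⟩ := posSemidef_iff_eq_transpose_mul_self.mp hB
  rw [Matrix.mul_kronecker_mul, ← kron_conjTranspose]
  exact posSemidef_conjTranspose_mul_self _

-- Schmidt rank facts
lemma schmidt_mem_d1 (ψ : Fin d₁ × Fin d₂ → ℂ) :
    d₁ ∈ {r | ∃ (x : Fin r → Fin d₁ → ℂ) (y : Fin r → Fin d₂ → ℂ),
      ψ = fun p => ∑ α, x α p.1 * y α p.2} := by
  refine ⟨fun α i => if α = i then 1 else 0, fun α a => ψ (α, a), ?_⟩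
  funext p
  simp [ite_mul, Finset.sum_ite_eq]

lemma schmidtRank_le_d1 (ψ : Fin d₁ × Fin d₂ → ℂ) : schmidtRank ψ ≤ d₁ :=
  Nat.sInf_le (schmidt_mem_d1 ψ)

lemma schmidtRank_le_d2 (ψ : Fin d₁ × Fin d₂ → ℂ) : schmidtRank ψ ≤ d₂ := by
  refine Nat.sInf_le ⟨fun α i => ψ (i, α), fun α a => if α = a then 1 else 0, ?_⟩
  funext p
  simp [mul_ite, Finset.sum_ite_eq]

lemma rep_pad {k r : ℕ} (hrk : r ≤ k) (x : Fin r → Fin d₁ → ℂ) (y : Fin r → Fin d₂ → ℂ) :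
    ∃ (x' : Fin k → Fin d₁ → ℂ) (y' : Fin k → Fin d₂ → ℂ),
      (fun p : Fin d₁ × Fin d₂ => ∑ α, x α p.1 * y α p.2)
        = fun p => ∑ α, x' α p.1 * y' α p.2 := by
  refine ⟨fun α i => if h' : (α : ℕ) < r then x ⟨α, h'⟩ i else 0,
          fun α a => if h' : (α : ℕ) < r then y ⟨α, h'⟩ a else 0, ?_⟩
  funext p
  have hterm : ∀ α : Fin k,
      (if h' : (α : ℕ) < r then x ⟨α, h'⟩ p.1 else 0) *
        (if h' : (α : ℕ) < r then y ⟨α, h'⟩ p.2 else 0)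
      = if h' : (α : ℕ) < r then x ⟨α, h'⟩ p.1 * y ⟨α, h'⟩ p.2 else 0 := by
    intro α
    by_cases h' : (α : ℕ) < r <;> simp [h']
  simp only [hterm]
  have hL : ∑ α : Fin r, x α p.1 * y α p.2
      = ∑ n ∈ Finset.range r,
          (fun n => if h' : n < r then x ⟨n, h'⟩ p.1 * y ⟨n, h'⟩ p.2 else 0) n := by
    rw [← Fin.sum_univ_eq_sum_range]
    refine Finset.sum_congr rfl fun α _ => ?_
    simp [α.isLt]
  have hR : ∑ α : Fin k,
        (if h' : (α : ℕ) < r then x ⟨α, h'⟩ p.1 * y ⟨α, h'⟩ p.2 else 0)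
      = ∑ n ∈ Finset.range k,
          (fun n => if h' : n < r then x ⟨n, h'⟩ p.1 * y ⟨n, h'⟩ p.2 else 0) n := by
    rw [← Fin.sum_univ_eq_sum_range]
  rw [hL, hR]
  refine Finset.sum_subset (Finset.range_subset_range.mpr hrk) fun n _ hn => ?_
  simp only [Finset.mem_range, not_lt] at hn
  simp [Nat.not_lt.mpr hn]

lemma rep_of_schmidtRank_le {k : ℕ} {ψ : Fin d₁ × Fin d₂ → ℂ} (h : schmidtRank ψ ≤ k) :
    ∃ (x : Fin k → Fin d₁ → ℂ) (y : Fin k → Fin d₂ → ℂ),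
      ψ = fun p => ∑ α, x α p.1 * y α p.2 := by
  have hne : {r | ∃ (x : Fin r → Fin d₁ → ℂ) (y : Fin r → Fin d₂ → ℂ),
      ψ = fun p => ∑ α, x α p.1 * y α p.2}.Nonempty := ⟨d₁, schmidt_mem_d1 ψ⟩
  obtain ⟨x, y, hxy⟩ := Nat.sInf_mem hne
  obtain ⟨x', y', h''⟩ := rep_pad (k := k) h x y
  exact ⟨x', y', hxy.trans h''⟩

-- outMat lemmas
lemma outMat_sum {k : ℕ} {ι : Type*} [Fintype ι]
    (a : ι → Matrix (Fin k × Fin d₁) (Fin k × Fin d₁) ℂ) :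
    outMat φ (∑ t, a t) = ∑ t, outMat φ (a t) := by
  ext p q
  have h1 : (Matrix.of fun x y => (∑ t, a t) (p.1, x) (q.1, y))
      = ∑ t, Matrix.of fun x y => a t (p.1, x) (q.1, y) := by
    ext x y
    simp [Matrix.sum_apply]
  show φ (Matrix.of fun x y => (∑ t, a t) (p.1, x) (q.1, y)) p.2 q.2 = _
  rw [h1, map_sum]
  simp [Matrix.sum_apply, outMat]

lemma outMat_herm {k : ℕ} (hφstar : ∀ a, φ aᴴ = (φ a)ᴴ)
    {a : Matrix (Fin k × Fin d₁) (Fin k × Fin d₁) ℂ} (ha : a.IsHermitian) :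
    (outMat φ a).IsHermitian := by
  have : (outMat φ a)ᴴ = outMat φ a := by
    ext p q
    rw [conjTranspose_apply]
    show star (φ (Matrix.of fun x y => a (q.1, x) (p.1, y)) q.2 p.2) = _
    have h2 : (Matrix.of fun x y => a (q.1, x) (p.1, y))ᴴ
        = Matrix.of fun x y => a (p.1, x) (q.1, y) := by
      ext x y
      rw [conjTranspose_apply, Matrix.of_apply, Matrix.of_apply]
      exact ha.apply _ _
    calc star (φ (Matrix.of fun x y => a (q.1, x) (p.1, y)) q.2 p.2)
        = (φ (Matrix.of fun x y => a (q.1, x) (p.1, y)))ᴴ p.2 q.2 := rfl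
      _ = φ ((Matrix.of fun x y => a (q.1, x) (p.1, y))ᴴ) p.2 q.2 := by rw [hφstar]
      _ = _ := by rw [h2]; rfl
  exact this

-- the main part 1 equivalence, for every k
lemma part1 {k : ℕ} (hφstar : ∀ a, φ aᴴ = (φ a)ᴴ) :
    (∀ a : Matrix (Fin k × Fin d₁) (Fin k × Fin d₁) ℂ, a.PosSemidef →
        (outMat φ a).PosSemidef) ↔
      (∀ σ : Matrix (Fin d₁ × Fin d₂) (Fin d₁ × Fin d₂) ℂ,
        σ.PosSemidef → SchmidtNumberLE k σ → 0 ≤ (σ * choiMatrix φ).trace) := by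
  constructor
  · rintro hpos σ hσ ⟨m, ψ, hSR, rfl⟩
    rw [Finset.sum_mul, trace_sum]
    refine Finset.sum_nonneg fun t _ => ?_
    obtain ⟨x, y, hxy⟩ := rep_of_schmidtRank_le (hSR t)
    rw [hxy, trace_eq_canon, ← quad_eq_canon]
    exact (hpos _ (psd_outer _)).dotProduct_mulVec_nonneg _
  · intro htr a ha
    obtain ⟨B, rfl⟩ := posSemidef_iff_eq_transpose_mul_self.mp ha
    refine .of_dotProduct_mulVec_nonneg (outMat_herm φ hφstar (isHermitian_conjTranspose_mul_self B)) fun w => ?_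
    have hdec : Bᴴ * B = ∑ t : Fin k × Fin d₁,
        vecMulVec (fun r : Fin k × Fin d₁ => (starRingEnd ℂ) (B t (r.1, r.2)))
          (star fun r : Fin k × Fin d₁ => (starRingEnd ℂ) (B t (r.1, r.2))) := by
      ext p q
      simp [Matrix.mul_apply, Matrix.sum_apply, vecMulVec_apply, conjTranspose_apply,
        mul_comm]
    rw [hdec, outMat_sum]
    have hsplit : ∀ (M : (Fin k × Fin d₁) → Matrix (Fin k × Fin d₂) (Fin k × Fin d₂) ℂ),
        star w ⬝ᵥ (∑ t, M t) *ᵥ w = ∑ t, star w ⬝ᵥ (M t) *ᵥ w := by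
      intro M
      simp only [mulVec, dotProduct, Matrix.sum_apply, Finset.sum_apply,
        Finset.sum_mul, Finset.mul_sum]
      conv_lhs => enter [2, q]; rw [Finset.sum_comm]
      rw [Finset.sum_comm]
    rw [hsplit]
    refine Finset.sum_nonneg fun t _ => ?_
    have hq := quad_eq_canon φ (fun α i => B t (α, i)) (fun α c => w (α, c))
    have ht' := trace_eq_canon φ (fun p : Fin d₁ × Fin d₂ => ∑ α, B t (α, p.1) * w (α, p.2))
    have hfin : (0:ℂ) ≤ (vecMulVec (fun p : Fin d₁ × Fin d₂ => ∑ α, B t (α, p.1) * w (α, p.2))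
        (star fun p : Fin d₁ × Fin d₂ => ∑ α, B t (α, p.1) * w (α, p.2)) * choiMatrix φ).trace := by
      refine htr _ (psd_outer _)
        ⟨1, fun _ => (fun p : Fin d₁ × Fin d₂ => ∑ α, B t (α, p.1) * w (α, p.2)),
          fun _ => Nat.sInf_le ⟨fun α i => B t (α, i), fun α c => w (α, c), rfl⟩, by simp⟩
    rw [ht'] at hfin
    rw [← hq] at hfin
    exact hfin

-- kronecker trace identity
lemma trace_kron (σ₁ : Matrix (Fin d₁) (Fin d₁) ℂ) (σ₂ : Matrix (Fin d₂) (Fin d₂) ℂ) :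
    ((σ₁ ⊗ₖ σ₂) * choiMatrix φ).trace = (σ₂ * φ σ₁ᵀ).trace := by
  rw [trace_mul_choi]
  simp only [kroneckerMap_apply, Fintype.sum_prod_type]
  rw [sum4_perm]
  conv_lhs => enter [2, i1, 2, i2]; rw [Finset.sum_comm]
  rw [Matrix.trace]
  simp only [Matrix.diag, Matrix.mul_apply, phi_apply φ σ₁ᵀ, Matrix.sum_apply,
    Matrix.smul_apply, transpose_apply, smul_eq_mul, Finset.mul_sum]
  refine Finset.sum_congr rfl fun c _ => Finset.sum_congr rfl fun b _ => ?_
  refine Finset.sum_congr rfl fun s _ => Finset.sum_congr rfl fun t _ => ?_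
  ring

-- part 2
lemma part2 (hφstar : ∀ a, φ aᴴ = (φ a)ᴴ) :
    (∀ a : Matrix (Fin d₁) (Fin d₁) ℂ, a.PosSemidef → (φ a).PosSemidef) ↔
      ∀ σ : Matrix (Fin d₁ × Fin d₂) (Fin d₁ × Fin d₂) ℂ,
        σ.PosSemidef → Separable σ → 0 ≤ (σ * choiMatrix φ).trace := by
  constructor
  · rintro hpos σ hσ ⟨m, σ₁, σ₂, h1, h2, rfl⟩
    rw [Finset.sum_mul, trace_sum]
    refine Finset.sum_nonneg fun t _ => ?_
    rw [trace_kron]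
    exact trace_mul_psd_nonneg (h2 t) (hpos _ (h1 t).transpose)
  · intro htr a ha
    refine .of_dotProduct_mulVec_nonneg ((hφstar a).symm.trans (congrArg φ ha.1)) fun u => ?_
    have h := htr (aᵀ ⊗ₖ vecMulVec u (star u)) (psd_kron ha.transpose (psd_outer u))
      ⟨1, fun _ => aᵀ, fun _ => vecMulVec u (star u), fun _ => ha.transpose,
        fun _ => psd_outer u, by simp⟩
    rw [trace_kron, transpose_transpose] at h
    rwa [trace_outer_mul] at h

-- choi matrix hermitian
lemma stdBasis_ct (i j : Fin d₁) :
    (single i j (1:ℂ))ᴴ = single j i 1 := by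
  ext a b
  simp [conjTranspose_apply, Matrix.single, apply_ite, and_comm]

lemma choi_herm (hφstar : ∀ a, φ aᴴ = (φ a)ᴴ) : (choiMatrix φ).IsHermitian := by
  have : (choiMatrix φ)ᴴ = choiMatrix φ := by
    ext P Q
    rw [conjTranspose_apply, choi_entry, choi_entry]
    calc star (φ (single Q.1 P.1 1) Q.2 P.2)
        = (φ (single Q.1 P.1 1))ᴴ P.2 Q.2 := rfl
      _ = φ ((single Q.1 P.1 (1:ℂ))ᴴ) P.2 Q.2 := by rw [hφstar]
      _ = _ := by rw [stdBasis_ct]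
  exact this

end Helpers

theorem kPositive_iff_trace_schmidt (d₁ d₂ k : ℕ) (hk1 : 1 ≤ k) (hk2 : k ≤ min d₁ d₂)
    (φ : Matrix (Fin d₁) (Fin d₁) ℂ →ₗ[ℂ] Matrix (Fin d₂) (Fin d₂) ℂ)
    (hφstar : ∀ a, φ aᴴ = (φ a)ᴴ) :
    -- φ is k-positive iff tr(σ φ̂) ≥ 0 for every PSD σ of Schmidt number ≤ k
    (kPositive d₁ d₂ k φ ↔
      ∀ σ : Matrix (Fin d₁ × Fin d₂) (Fin d₁ × Fin d₂) ℂ,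
        σ.PosSemidef → SchmidtNumberLE k σ → 0 ≤ (σ * choiMatrix φ).trace)
    ∧
    -- φ is positive iff tr(σ φ̂) ≥ 0 for every separable σ
    ((∀ a : Matrix (Fin d₁) (Fin d₁) ℂ, a.PosSemidef → (φ a).PosSemidef) ↔
      ∀ σ : Matrix (Fin d₁ × Fin d₂) (Fin d₁ × Fin d₂) ℂ,
        σ.PosSemidef → Separable σ → 0 ≤ (σ * choiMatrix φ).trace)
    ∧
    -- φ is completely positive (min d₁ d₂ - positive) iff φ̂ is positive semidefinite
    (kPositive d₁ d₂ (min d₁ d₂) φ ↔ (choiMatrix φ).PosSemidef) := by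
  refine ⟨part1 φ hφstar, part2 φ hφstar, ?_, ?_⟩
  · intro hd
    refine .of_dotProduct_mulVec_nonneg (choi_herm φ hφstar) fun ψ => ?_
    rw [← trace_outer_mul]
    exact (part1 φ hφstar).mp hd _ (psd_outer ψ)
      ⟨1, fun _ => ψ, fun _ => le_min (schmidtRank_le_d1 ψ) (schmidtRank_le_d2 ψ), by simp⟩
  · intro hpsd
    refine (part1 φ hφstar).mpr ?_ 
    rintro σ hσ ⟨m, ψ, hSR, rfl⟩
    rw [Finset.sum_mul, trace_sum]
    refine Finset.sum_nonneg fun t _ => ?_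
    rw [trace_outer_mul]
    exact hpsd.dotProduct_mulVec_nonneg (ψ t)
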